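/- Let S be a ring and R a commutative subring such that every element of R that is invertible in S is already invertible in R. Then every matrix A ∈ Mat_n(R) invertible in Mat_n(S) is already invertible in Mat_n(R), and A^{-1} has all entries in R; consequently D(R,S) = R(R,S) = R. -/

import Mathlib

open Matrix

theorem aux_det_isUnit {R T : Type*} [CommRing R] [Ring T] (g : R →+* T)
    (hg : ∀ r, g r ∈ Subring.center T) {n : ℕ}
    {A : Matrix (Fin n) (Fin n) R} {B : Matrix (Fin n) (Fin n) T}
    (h1 : A.map g * B = 1) : IsUnit (g A.det) := by
  by_contra hd
  set d : T := g A.det with hd_def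
  have hdc : ∀ t : T, d * t = t * d := fun t => (Subring.mem_center_iff.mp (hg A.det) t).symm
  -- the two-sided ideal generated by the central element `d`
  set I0 : TwoSidedIdeal T := TwoSidedIdeal.mk' {x | ∃ t, x = t * d}
    ⟨0, (zero_mul d).symm⟩
    (fun {x y} hx hy => by obtain ⟨t1, rfl⟩ := hx; obtain ⟨t2, rfl⟩ := hy
                           exact ⟨t1 + t2, (add_mul t1 t2 d).symm⟩)
    (fun {x} hx => by obtain ⟨t, rfl⟩ := hx; exact ⟨-t, (neg_mul t d).symm⟩)
    (fun {x y} hy => by obtain ⟨t, rfl⟩ := hy; exact ⟨x * t, (mul_assoc x t d).symm⟩)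
    (fun {x y} hx => by obtain ⟨t, rfl⟩ := hx; exact ⟨t * y, by
      rw [mul_assoc, mul_assoc, hdc y]⟩) with hI0
  have hd_mem : d ∈ I0 := by
    rw [hI0, TwoSidedIdeal.mem_mk']; exact ⟨1, (one_mul d).symm⟩
  have h1_nmem : ∀ J : TwoSidedIdeal T, (1 : T) ∈ J → ∀ x ∈ J, True := fun _ _ _ _ => trivial
  -- Zorn's lemma to get a maximal two-sided ideal containing I0
  have hzorn := zorn_subset_nonempty
    {s : Set T | ∃ J : TwoSidedIdeal T, (J : Set T) = s ∧ (1 : T) ∉ s}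
    (fun c hc hchain hne => by
      refine ⟨⋃₀ c, ⟨TwoSidedIdeal.mk' (⋃₀ c) ?_ ?_ ?_ ?_ ?_, TwoSidedIdeal.coe_mk' _ _ _ _ _ _, ?_⟩, fun s hs => Set.subset_sUnion_of_mem hs⟩
      · obtain ⟨s, hs⟩ := hne
        obtain ⟨J, rfl, -⟩ := hc hs
        exact Set.mem_sUnion_of_mem J.zero_mem hs
      · intro x y hx hy
        obtain ⟨s1, hs1, hx⟩ := hx
        obtain ⟨s2, hs2, hy⟩ := hy
        rcases hchain.total hs1 hs2 with h | h
        · obtain ⟨J, rfl, -⟩ := hc hs2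
          exact Set.mem_sUnion_of_mem (J.add_mem (h hx) hy) hs2
        · obtain ⟨J, rfl, -⟩ := hc hs1
          exact Set.mem_sUnion_of_mem (J.add_mem hx (h hy)) hs1
      · intro x hx
        obtain ⟨s, hs, hx⟩ := hx
        obtain ⟨J, rfl, -⟩ := hc hs
        exact Set.mem_sUnion_of_mem (J.neg_mem hx) hs
      · intro x y hy
        obtain ⟨s, hs, hy⟩ := hy
        obtain ⟨J, rfl, -⟩ := hc hs
        exact Set.mem_sUnion_of_mem (J.mul_mem_left x y hy) hs
      · intro x y hx
        obtain ⟨s, hs, hx⟩ := hx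
        obtain ⟨J, rfl, -⟩ := hc hs
        exact Set.mem_sUnion_of_mem (J.mul_mem_right x y hx) hs
      · rintro ⟨s, hs, h1s⟩
        obtain ⟨J, rfl, h1J⟩ := hc hs
        exact h1J h1s)
    (I0 : Set T)
    ⟨I0, rfl, by
      rw [hI0, TwoSidedIdeal.coe_mk']
      rintro ⟨t, ht⟩
      exact hd ⟨⟨d, t, by rw [hdc t, ← ht], by rw [← ht]⟩, rfl⟩⟩
  obtain ⟨M, hIM, hMmem, hMmax⟩ := hzorn
  obtain ⟨m, rfl, h1m⟩ := hMmem
  -- the quotient ring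
  set Q := m.ringCon.Quotient with hQ
  set π : T →+* Q := RingCon.mk' m.ringCon with hπ
  have hπsurj : Function.Surjective π := fun q => Quot.inductionOn q fun t => ⟨t, rfl⟩
  have hker : ∀ x : T, π x = 0 ↔ x ∈ m := by
    intro x
    have : π x = π 0 ↔ m.ringCon x 0 := RingCon.eq m.ringCon
    rw [map_zero] at this
    rw [this]
    exact Iff.rfl
  have hQnontrivial : Nontrivial Q := by
    refine ⟨⟨1, 0, fun h => h1m ?_⟩⟩
    have : π 1 = 0 := by rw [_root_.map_one]; exact h
    exact (hker 1).mp this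
  have hQsimple : IsSimpleRing Q := by
    refine IsSimpleRing.of_eq_bot_or_eq_top ?_
    intro J
    by_cases h1J : (1 : T) ∈ π ⁻¹' (J : Set Q)
    · right
      rw [eq_top_iff]
      intro q _
      obtain ⟨t, rfl⟩ := hπsurj q
      have := J.mul_mem_left (π t) 1 (by simpa using h1J)
      simpa using this
    · left
      have hI' : ∃ I' : TwoSidedIdeal T, (I' : Set T) = π ⁻¹' (J : Set Q) := by
        refine ⟨TwoSidedIdeal.mk' (π ⁻¹' (J : Set Q)) ?_ ?_ ?_ ?_ ?_,
          TwoSidedIdeal.coe_mk' _ _ _ _ _ _⟩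
        · simp only [Set.mem_preimage, map_zero, SetLike.mem_coe]; exact J.zero_mem
        · intro x y hx hy
          simp only [Set.mem_preimage, map_add, SetLike.mem_coe] at *
          exact J.add_mem hx hy
        · intro x hx
          simp only [Set.mem_preimage, map_neg, SetLike.mem_coe] at *
          exact J.neg_mem hx
        · intro x y hy
          simp only [Set.mem_preimage, _root_.map_mul, SetLike.mem_coe] at *
          exact J.mul_mem_left _ _ hy
        · intro x y hx
          simp only [Set.mem_preimage, _root_.map_mul, SetLike.mem_coe] at *
          exact J.mul_mem_right _ _ hx
      obtain ⟨I', hI'coe⟩ := hI'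
      have hsub : (m : Set T) ⊆ π ⁻¹' (J : Set Q) := by
        intro x hx
        simp only [Set.mem_preimage, SetLike.mem_coe]
        rw [(hker x).mpr hx]
        exact J.zero_mem
      have hmax := hMmax ⟨I', hI'coe, h1J⟩ hsub
      rw [eq_bot_iff]
      intro q hq
      rw [TwoSidedIdeal.mem_bot]
      obtain ⟨t, rfl⟩ := hπsurj q
      exact (hker t).mpr (hmax (by simpa using hq))
  have hfield : IsField (Subring.center Q) := IsSimpleRing.isField_center Q
  letI : Field (Subring.center Q) := hfield.toField
  have hcentral : ∀ r : R, (π.comp g) r ∈ Subring.center Q := by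
    intro r
    rw [Subring.mem_center_iff]
    intro q
    obtain ⟨t, rfl⟩ := hπsurj q
    rw [RingHom.comp_apply, ← _root_.map_mul, ← _root_.map_mul,
      Subring.mem_center_iff.mp (hg r) t]
  set g' : R →+* Subring.center Q := (π.comp g).codRestrict _ hcentral with hg'
  have hdet0 : (A.map g').det = 0 := by
    have h' : (A.map g').det = g' A.det := (RingHom.map_det g' A).symm
    rw [h', ← ZeroMemClass.coe_eq_zero]
    show π (g A.det) = 0
    exact (hker _).mpr (hIM hd_mem)
  obtain ⟨v, hv0, hv⟩ := Matrix.exists_vecMul_eq_zero_iff.mpr hdet0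
  set w : Fin n → Q := fun i => ((v i : Subring.center Q) : Q) with hw
  have hwA : w ᵥ* (A.map (π.comp g)) = 0 := by
    funext j
    have h2 : ((v ᵥ* (A.map g')) j : Q) = (w ᵥ* (A.map (π.comp g))) j := by
      simp only [Matrix.vecMul, dotProduct, Matrix.map_apply, hw,
        AddSubmonoidClass.coe_finset_sum, MulMemClass.coe_mul]
      rfl
    rw [hv] at h2
    simpa using h2.symm
  have hone : (A.map (π.comp g)) * (B.map π) = 1 := by
    have h3 := congrArg (fun X : Matrix (Fin n) (Fin n) T => X.map π) h1
    simp only [Matrix.map_mul, Matrix.map_map, ← RingHom.coe_comp] at h3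
    rwa [Matrix.map_one π (map_zero π) (_root_.map_one π)] at h3
  have hw0 : w = 0 := by
    have h4 : w ᵥ* ((A.map (π.comp g)) * (B.map π)) = 0 := by
      rw [← Matrix.vecMul_vecMul, hwA, Matrix.zero_vecMul]
    rw [hone, Matrix.vecMul_one] at h4
    exact h4
  obtain ⟨i, hi⟩ := Function.ne_iff.mp hv0
  apply hi
  have h5 : ((v i : Subring.center Q) : Q) = 0 := congrFun hw0 i
  simp only [Pi.zero_apply]
  exact Subtype.ext (by exact_mod_cast h5)


theorem aux_main {R S : Type*} [CommRing R] [Ring S] (f : R →+* S) (hf : Function.Injective f)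
    (hcl : ∀ (r : R) (u : S), f r * u = 1 → u * f r = 1 → ∃ v : R, f v = u)
    {n : ℕ} (A : Matrix (Fin n) (Fin n) R) (B : Matrix (Fin n) (Fin n) S)
    (hAB : A.map f * B = 1) (hBA : B * A.map f = 1) :
    IsUnit A ∧ ∀ i j, B i j ∈ Set.range f := by
  have hcomm : ∀ (r : R) (i j), f r * B i j = B i j * f r := by
    intro r i j
    set D : Matrix (Fin n) (Fin n) S := Matrix.diagonal (fun _ => f r) with hD
    set u : (Matrix (Fin n) (Fin n) S)ˣ := ⟨A.map f, B, hAB, hBA⟩ with hu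
    have hDA : Commute D (A.map f) := by
      show D * A.map f = A.map f * D
      ext i' j'
      rw [Matrix.diagonal_mul, Matrix.mul_diagonal, Matrix.map_apply, ← _root_.map_mul,
        ← _root_.map_mul, mul_comm]
    have hDB : D * B = B * D := Commute.units_inv_right (u := u) hDA
    calc f r * B i j = (D * B) i j := by rw [Matrix.diagonal_mul]
    _ = (B * D) i j := by rw [hDB]
    _ = B i j * f r := by rw [Matrix.mul_diagonal]
  set T : Subring S := Subring.centralizer (Set.range f) with hT
  have hBT : ∀ i j, B i j ∈ T := fun i j => Subring.mem_centralizer_iff.mpr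
    (by rintro y ⟨r, rfl⟩; exact hcomm r i j)
  have hfT : ∀ r : R, f r ∈ T := fun r => Subring.mem_centralizer_iff.mpr
    (by rintro y ⟨r', rfl⟩; rw [← _root_.map_mul, ← _root_.map_mul, mul_comm])
  set g : R →+* T := f.codRestrict T hfT with hg'
  have hg : ∀ r, g r ∈ Subring.center T := by
    intro r
    rw [Subring.mem_center_iff]
    rintro ⟨t, ht⟩
    exact Subtype.ext (Subring.mem_centralizer_iff.mp ht (f r) ⟨r, rfl⟩).symm
  set B' : Matrix (Fin n) (Fin n) T := fun i j => ⟨B i j, hBT i j⟩ with hB'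
  have hAB' : A.map g * B' = 1 := by
    ext i j
    have hc : ((A.map g * B') i j : S) = (A.map f * B) i j := by
      simp only [Matrix.mul_apply, Matrix.map_apply, AddSubmonoidClass.coe_finset_sum,
        MulMemClass.coe_mul, hB']
      show ((A.map g * B') i j : S) = _
      simp only [Matrix.mul_apply, Matrix.map_apply, AddSubmonoidClass.coe_finset_sum,
        MulMemClass.coe_mul]
      rfl
    rw [hAB] at hc
    rw [hc]
    simp [Matrix.one_apply, apply_ite (fun x : T => (x : S))]
  have hdu : IsUnit (g A.det) := aux_det_isUnit g hg hAB'
  obtain ⟨uu, huu⟩ := hdu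
  have e1 : (uu : T) * ↑uu⁻¹ = 1 := uu.mul_inv
  have e2 : (↑uu⁻¹ : T) * uu = 1 := uu.inv_mul
  rw [huu] at e1 e2
  have e1' : ((g A.det : T) : S) * (((uu⁻¹ : Tˣ) : T) : S) = 1 := by
    exact_mod_cast congrArg (fun x : T => (x : S)) e1
  have e2' : (((uu⁻¹ : Tˣ) : T) : S) * ((g A.det : T) : S) = 1 := by
    exact_mod_cast congrArg (fun x : T => (x : S)) e2
  obtain ⟨v, hv⟩ := hcl A.det _ e1' e2'
  have hdetunit : IsUnit A.det := IsUnit.of_mul_eq_one v (hf (by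
    rw [_root_.map_mul, hv, _root_.map_one]; exact e1'))
  have hA : IsUnit A := (Matrix.isUnit_iff_isUnit_det A).mpr hdetunit
  refine ⟨hA, ?_⟩
  obtain ⟨U, hU⟩ := hA
  have l1 : ((↑U⁻¹ : Matrix (Fin n) (Fin n) R).map f) * (A.map f) = 1 := by
    rw [← Matrix.map_mul, ← hU, Units.inv_mul, Matrix.map_one f (map_zero f) (_root_.map_one f)]
  have hBeq : B = (↑U⁻¹ : Matrix (Fin n) (Fin n) R).map f := by
    calc B = 1 * B := (one_mul B).symm
    _ = (((↑U⁻¹ : Matrix (Fin n) (Fin n) R).map f) * (A.map f)) * B := by rw [l1]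
    _ = ((↑U⁻¹ : Matrix (Fin n) (Fin n) R).map f) * ((A.map f) * B) := mul_assoc _ _ _
    _ = (↑U⁻¹ : Matrix (Fin n) (Fin n) R).map f := by rw [hAB, mul_one]
  intro i j
  exact ⟨(↑U⁻¹ : Matrix (Fin n) (Fin n) R) i j, by rw [hBeq]; rfl⟩

/-- The division closure of a subring `R₀` of `S`. -/
def divisionClosure {S : Type*} [Ring S] (R₀ : Subring S) : Subring S :=
  sInf {D : Subring S | R₀ ≤ D ∧
    ∀ x ∈ D, ∀ y : S, x * y = 1 → y * x = 1 → y ∈ D}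

/-- The rational closure of a subring `R₀` of `S`. -/
def rationalClosure {S : Type*} [Ring S] (R₀ : Subring S) : Subring S :=
  sInf {D : Subring S | R₀ ≤ D ∧
    ∀ (n : ℕ) (A B : Matrix (Fin n) (Fin n) S), (∀ i j, A i j ∈ R₀) →
      A * B = 1 → B * A = 1 → ∀ i j, B i j ∈ D}

/-- If the commutative subring `R` of `S` is closed under inverses from `S`,
then every matrix over `R` invertible over `S` is already invertible over `R`,
its inverse has entries in `R`, and `D(R,S) = R(R,S) = R`. -/
theorem closures_eq_self_of_inverse_closed
    {R S : Type*} [CommRing R] [Ring S] (f : R →+* S) (hf : Function.Injective f)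
    (hcl : ∀ (r : R) (u : S), f r * u = 1 → u * f r = 1 → ∃ v : R, f v = u) :
    (∀ (n : ℕ) (A : Matrix (Fin n) (Fin n) R) (B : Matrix (Fin n) (Fin n) S),
      A.map f * B = 1 → B * A.map f = 1 →
        IsUnit A ∧ ∀ i j, B i j ∈ Set.range f) ∧
    divisionClosure f.range = f.range ∧
    rationalClosure f.range = f.range := by
  have part1 : ∀ (n : ℕ) (A : Matrix (Fin n) (Fin n) R) (B : Matrix (Fin n) (Fin n) S),
      A.map f * B = 1 → B * A.map f = 1 → IsUnit A ∧ ∀ i j, B i j ∈ Set.range f :=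
    fun n A B hAB hBA => aux_main f hf hcl A B hAB hBA
  refine ⟨part1, ?_, ?_⟩
  · apply le_antisymm
    · apply sInf_le
      refine ⟨le_refl _, ?_⟩
      intro x hx y h1 h2
      obtain ⟨r, rfl⟩ := RingHom.mem_range.mp hx
      obtain ⟨v, rfl⟩ := hcl r y h1 h2
      exact ⟨v, rfl⟩
    · exact le_sInf fun D hD => hD.1
  · apply le_antisymm
    · apply sInf_le
      refine ⟨le_refl _, ?_⟩
      intro n A B hA hAB hBA i j
      set A' : Matrix (Fin n) (Fin n) R :=
        fun i j => (RingHom.mem_range.mp (hA i j)).choose with hA'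
      have hmap : A'.map f = A := by
        ext i' j'
        exact (RingHom.mem_range.mp (hA i' j')).choose_spec
      obtain ⟨x, hx⟩ := (part1 n A' B (by rw [hmap]; exact hAB) (by rw [hmap]; exact hBA)).2 i j
      exact ⟨x, hx⟩
    · exact le_sInf fun D hD => hD.1
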